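/- Let α : (0,∞) → ℝ be twice continuously differentiable with α(ρ) > 0 for all ρ > 0 and with ρ ↦ 1/α(ρ) concave on (0,∞), and let ε : (0,∞) × ℝ → ℝ be a twice continuously differentiable convex function. Then the specific energy e(u, w, η, v) = u²/2 + (α(1/v)/(2v))·w² + ε(v,η) is a convex function of (u, w, η, v) on ℝ × ℝ × ℝ × (0,∞). -/

import Mathlib

lemma quad_key (w₁ w₂ t₁ t₂ t a b : ℝ) (ht₁ : 0 < t₁) (ht₂ : 0 < t₂) (ht : 0 < t)
    (ha : 0 ≤ a) (hb : 0 ≤ b) (hts : a * t₁ + b * t₂ ≤ t) :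
    (a * w₁ + b * w₂) ^ 2 / t ≤ a * w₁ ^ 2 / t₁ + b * w₂ ^ 2 / t₂ := by
  have hN : (0:ℝ) ≤ a * w₁ ^ 2 * t₂ + b * w₂ ^ 2 * t₁ := by positivity
  have key1 : (a * w₁ + b * w₂) ^ 2 * (t₁ * t₂)
      ≤ (a * t₁ + b * t₂) * (a * w₁ ^ 2 * t₂ + b * w₂ ^ 2 * t₁) := by
    nlinarith [mul_nonneg (mul_nonneg ha hb) (sq_nonneg (t₁ * w₂ - t₂ * w₁))]
  have hR : a * w₁ ^ 2 / t₁ + b * w₂ ^ 2 / t₂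
      = (a * w₁ ^ 2 * t₂ + b * w₂ ^ 2 * t₁) / (t₁ * t₂) := by
    field_simp
  rw [hR, div_le_div_iff₀ ht (mul_pos ht₁ ht₂)]
  calc (a * w₁ + b * w₂) ^ 2 * (t₁ * t₂)
      ≤ (a * t₁ + b * t₂) * (a * w₁ ^ 2 * t₂ + b * w₂ ^ 2 * t₁) := key1
    _ ≤ (a * w₁ ^ 2 * t₂ + b * w₂ ^ 2 * t₁) * t := by
        rw [mul_comm]; exact mul_le_mul_of_nonneg_left hts hN

lemma mid_key (α : ℝ → ℝ) (hαpos : ∀ ρ ∈ Set.Ioi (0 : ℝ), 0 < α ρ)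
    (hconc : ConcaveOn ℝ (Set.Ioi 0) (fun ρ => 1 / α ρ))
    (v₁ v₂ w₁ w₂ a b : ℝ) (hv₁ : 0 < v₁) (hv₂ : 0 < v₂)
    (ha : 0 ≤ a) (hb : 0 ≤ b) (hab : a + b = 1) :
    α (1 / (a * v₁ + b * v₂)) / (2 * (a * v₁ + b * v₂)) * (a * w₁ + b * w₂) ^ 2
      ≤ a * (α (1 / v₁) / (2 * v₁) * w₁ ^ 2) + b * (α (1 / v₂) / (2 * v₂) * w₂ ^ 2) := by
  set s := a * v₁ + b * v₂ with hs
  have hspos : 0 < s := by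
    rcases eq_or_lt_of_le ha with h | h
    · have hb1 : b = 1 := by linarith
      simp [hs, ← h, hb1, hv₂]
    · have h1 : 0 < a * v₁ := mul_pos h hv₁
      have h2 : 0 ≤ b * v₂ := mul_nonneg hb hv₂.le
      simp only [hs]; linarith
  have hα₁ : 0 < α (1 / v₁) := hαpos _ (Set.mem_Ioi.mpr (by positivity))
  have hα₂ : 0 < α (1 / v₂) := hαpos _ (Set.mem_Ioi.mpr (by positivity))
  have hαs : 0 < α (1 / s) := hαpos _ (Set.mem_Ioi.mpr (by positivity))
  set t₁ := v₁ / α (1 / v₁) with ht₁def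
  set t₂ := v₂ / α (1 / v₂) with ht₂def
  set t := s / α (1 / s) with htdef
  have ht₁ : 0 < t₁ := by positivity
  have ht₂ : 0 < t₂ := by positivity
  have ht : 0 < t := by positivity
  have hts : a * t₁ + b * t₂ ≤ t := by
    have hmem₁ : (1 / v₁) ∈ Set.Ioi (0:ℝ) := Set.mem_Ioi.mpr (by positivity)
    have hmem₂ : (1 / v₂) ∈ Set.Ioi (0:ℝ) := Set.mem_Ioi.mpr (by positivity)
    have hl : 0 ≤ a * v₁ / s := by positivity
    have hm : 0 ≤ b * v₂ / s := by positivity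
    have hsum : a * v₁ / s + b * v₂ / s = 1 := by field_simp; exact hs.symm
    have hcomb : (a * v₁ / s) • (1 / v₁) + (b * v₂ / s) • (1 / v₂) = 1 / s := by
      simp only [smul_eq_mul]
      have e1 : a * v₁ / s * (1 / v₁) = a / s := by
        field_simp
      have e2 : b * v₂ / s * (1 / v₂) = b / s := by
        field_simp
      rw [e1, e2, ← add_div, hab]
    have hcon := hconc.2 hmem₁ hmem₂ hl hm hsum
    rw [hcomb] at hcon
    simp only [smul_eq_mul] at hcon
    have h2 : a * t₁ + b * t₂
        = s * (a * v₁ / s * (1 / α (1 / v₁)) + b * v₂ / s * (1 / α (1 / v₂))) := by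
      rw [ht₁def, ht₂def]; field_simp
    calc a * t₁ + b * t₂
        = s * (a * v₁ / s * (1 / α (1 / v₁)) + b * v₂ / s * (1 / α (1 / v₂))) := h2
      _ ≤ s * (1 / α (1 / s)) := mul_le_mul_of_nonneg_left hcon hspos.le
      _ = t := by rw [htdef, mul_one_div]
  have hquad := quad_key w₁ w₂ t₁ t₂ t a b ht₁ ht₂ ht ha hb hts
  have hL : α (1 / s) / (2 * s) * (a * w₁ + b * w₂) ^ 2 = (a * w₁ + b * w₂) ^ 2 / t / 2 := by
    rw [htdef]; field_simp
  have hR₁ : a * (α (1 / v₁) / (2 * v₁) * w₁ ^ 2) = a * w₁ ^ 2 / t₁ / 2 := by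
    rw [ht₁def]; field_simp
  have hR₂ : b * (α (1 / v₂) / (2 * v₂) * w₂ ^ 2) = b * w₂ ^ 2 / t₂ / 2 := by
    rw [ht₂def]; field_simp
  rw [hL, hR₁, hR₂]
  linarith

theorem stmt_3 (α : ℝ → ℝ) (ε : ℝ × ℝ → ℝ)
    (hα : ContDiffOn ℝ 2 α (Set.Ioi 0))
    (hαpos : ∀ ρ ∈ Set.Ioi (0 : ℝ), 0 < α ρ)
    (hconc : ConcaveOn ℝ (Set.Ioi 0) (fun ρ => 1 / α ρ))
    (hε : ContDiffOn ℝ 2 ε (Set.Ioi 0 ×ˢ Set.univ))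
    (hεconv : ConvexOn ℝ (Set.Ioi 0 ×ˢ Set.univ) ε) :
    ConvexOn ℝ {x : ℝ × ℝ × ℝ × ℝ | 0 < x.2.2.2}
      (fun x => x.1 ^ 2 / 2 + (α (1 / x.2.2.2) / (2 * x.2.2.2)) * x.2.1 ^ 2
        + ε (x.2.2.2, x.2.2.1)) := by
  constructor
  · intro x hx y hy a b ha hb hab
    simp only [Set.mem_setOf_eq] at *
    simp only [Prod.smul_snd, Prod.snd_add, smul_eq_mul]
    rcases eq_or_lt_of_le ha with h | h
    · have hb1 : b = 1 := by linarith
      simp [← h, hb1, hy]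
    · have h1 : 0 < a * x.2.2.2 := mul_pos h hx
      have h2 : 0 ≤ b * y.2.2.2 := mul_nonneg hb hy.le
      show 0 < a * x.2.2.2 + b * y.2.2.2
      linarith
  · intro x hx y hy a b ha hb hab
    simp only [Set.mem_setOf_eq] at hx hy
    simp only [Prod.smul_fst, Prod.smul_snd, Prod.fst_add, Prod.snd_add, smul_eq_mul]
    have T1 : (a * x.1 + b * y.1) ^ 2 / 2 ≤ a * (x.1 ^ 2 / 2) + b * (y.1 ^ 2 / 2) := by
      nlinarith [sq_nonneg (x.1 - y.1), mul_nonneg ha hb]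
    have T2 := mid_key α hαpos hconc x.2.2.2 y.2.2.2 x.2.1 y.2.1 a b hx hy ha hb hab
    have T3 : ε (a * x.2.2.2 + b * y.2.2.2, a * x.2.2.1 + b * y.2.2.1)
        ≤ a * ε (x.2.2.2, x.2.2.1) + b * ε (y.2.2.2, y.2.2.1) := by
      have := hεconv.2 (Set.mk_mem_prod hx (Set.mem_univ x.2.2.1))
        (Set.mk_mem_prod hy (Set.mem_univ y.2.2.1)) ha hb hab
      simpa [Prod.smul_mk, Prod.mk_add_mk, smul_eq_mul] using this
    linarith
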